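/- arXiv:2111.01290 — 2 statements merged into one kernel-verified Lean document; each statement's English description precedes it below -/
import Mathlib

section
/- Let g, h : ℝⁿ → ℝ be strongly convex with modulus σ > 0 and assume φ := g − h is bounded below. Let ρ > 0 and let sequences (x^k), (y^k), (w^k) in ℝⁿ, stepsizes t_k > 0 and parameters ν_k ≥ 0 satisfy, for every k: w^k ∈ ∂h(x^k), w^k ∈ ∂g(y^k), d^k := y^k − x^k, x^{k+1} = y^k + t_k d^k, and φ(x^{k+1}) ≤ φ(y^k) − ρ t_k² ‖d^k‖² + ν_k. If the ν_k are chosen according to strategy (S1) (i.e. ν_{k+1} ≤ (1 − δ_{k+1})(φ(x^k) − φ(x^{k+1}) + ν_k) with δ_{k+1} ∈ [δ_min, 1], δ_min ∈ [0,1)) and ν_k → 0, then every cluster point of (x^k) is a critical point of φ, i.e. for every cluster point x̄ there exists w̄ ∈ ∂g(x̄) ∩ ∂h(x̄). -/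
open Set Filter Topology

noncomputable section

/-- The (convex-analysis) subdifferential of `f` at `x`:
the set of `w` with `f z ≥ f x + ⟨w, z - x⟩` for all `z`. -/
def subdiff {n : ℕ} (f : EuclideanSpace ℝ (Fin n) → ℝ) (x : EuclideanSpace ℝ (Fin n)) :
    Set (EuclideanSpace ℝ (Fin n)) :=
  {w | ∀ z, f x + (inner ℝ w (z - x) : ℝ) ≤ f z}

/-- `f` is strongly convex with modulus `σ`. -/
def StrongConvexWith {n : ℕ} (σ : ℝ) (f : EuclideanSpace ℝ (Fin n) → ℝ) : Prop :=
  ∀ x y : EuclideanSpace ℝ (Fin n), ∀ t : ℝ, 0 < t → t < 1 →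
    f (t • x + (1 - t) • y) ≤ t * f x + (1 - t) * f y - σ / 2 * (t * (1 - t) * ‖x - y‖ ^ 2)

/-- A strongly convex function (with nonnegative modulus) is convex. -/
lemma StrongConvexWith.convexOn {n : ℕ} {σ : ℝ} {f : EuclideanSpace ℝ (Fin n) → ℝ}
    (hσ : 0 ≤ σ) (hf : StrongConvexWith σ f) : ConvexOn ℝ Set.univ f := by
  refine ⟨convex_univ, fun x _ y _ a b ha hb hab => ?_⟩
  rcases ha.eq_or_lt with h0 | h0
  · have hb1 : b = 1 := by linarith
    simp [← h0, hb1]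
  · rcases hb.eq_or_lt with h1 | h1
    · have ha1 : a = 1 := by linarith
      simp [← h1, ha1]
    · have hb' : b = 1 - a := by linarith
      have ha1 : a < 1 := by linarith
      have H := hf x y a h0 ha1
      have hpos : 0 ≤ σ / 2 * (a * (1 - a) * ‖x - y‖ ^ 2) := by
        have h2 : 0 ≤ a * (1 - a) * ‖x - y‖ ^ 2 :=
          mul_nonneg (mul_nonneg h0.le (by linarith)) (sq_nonneg _)
        have h3 : 0 ≤ σ / 2 := by linarith
        exact mul_nonneg h3 h2
      subst hb'
      simp only [smul_eq_mul]
      linarith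

/-- The strengthened subgradient inequality for strongly convex functions. -/
lemma strong_subgrad {n : ℕ} {σ : ℝ} {f : EuclideanSpace ℝ (Fin n) → ℝ}
    (hσ : 0 < σ) (hf : StrongConvexWith σ f) {x w : EuclideanSpace ℝ (Fin n)}
    (hw : w ∈ subdiff f x) (z : EuclideanSpace ℝ (Fin n)) :
    f x + (inner ℝ w (z - x) : ℝ) + σ / 2 * ‖z - x‖ ^ 2 ≤ f z := by
  have key : ∀ t : ℝ, 0 < t → t < 1 →
      (inner ℝ w (z - x) : ℝ) + σ / 2 * ((1 - t) * ‖z - x‖ ^ 2) ≤ f z - f x := by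
    intro t ht0 ht1
    have H := hf z x t ht0 ht1
    have hsub := hw (t • z + (1 - t) • x)
    have hpt : t • z + (1 - t) • x - x = t • (z - x) := by
      rw [sub_smul, one_smul, smul_sub]
      abel
    rw [hpt, real_inner_smul_right] at hsub
    -- f x + t * ⟪w, z-x⟫ ≤ t f z + (1-t) f x - σ/2 (t (1-t) ‖z-x‖²)
    have := hsub.trans H
    have h1 : t * ((inner ℝ w (z - x) : ℝ) + σ / 2 * ((1 - t) * ‖z - x‖ ^ 2))
        ≤ t * (f z - f x) := by ring_nf; ring_nf at this; linarith
    exact le_of_mul_le_mul_left (by linarith [h1]) ht0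
  have hlim : Tendsto (fun m : ℕ =>
      (inner ℝ w (z - x) : ℝ) + σ / 2 * ((1 - 1 / (m : ℝ)) * ‖z - x‖ ^ 2)) atTop
      (nhds ((inner ℝ w (z - x) : ℝ) + σ / 2 * ((1 - 0) * ‖z - x‖ ^ 2))) := by
    exact tendsto_const_nhds.add ((((tendsto_const_nhds.sub
      tendsto_one_div_atTop_nhds_zero_nat).mul tendsto_const_nhds)).const_mul _)
  have hev : ∀ᶠ m : ℕ in atTop,
      (inner ℝ w (z - x) : ℝ) + σ / 2 * ((1 - 1 / (m : ℝ)) * ‖z - x‖ ^ 2) ≤ f z - f x := by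
    filter_upwards [eventually_ge_atTop 2] with m hm
    have hm2 : (2 : ℝ) ≤ (m : ℝ) := by exact_mod_cast hm
    have h0 : (0 : ℝ) < 1 / (m : ℝ) := by positivity
    have h1 : 1 / (m : ℝ) < 1 := by
      rw [div_lt_one (by linarith)]; linarith
    exact key _ h0 h1
  have := le_of_tendsto hlim hev
  simp only [sub_zero] at this
  linarith

theorem stmt9 {n : ℕ} (g h : EuclideanSpace ℝ (Fin n) → ℝ) (σ ρ : ℝ)
    (hσ : 0 < σ) (hρ : 0 < ρ)
    (hgs : StrongConvexWith σ g) (hhs : StrongConvexWith σ h)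
    (hbd : BddBelow (Set.range fun z => g z - h z))
    (x y w : ℕ → EuclideanSpace ℝ (Fin n)) (t ν : ℕ → ℝ)
    (ht : ∀ k, 0 < t k) (hν : ∀ k, 0 ≤ ν k)
    (hwh : ∀ k, w k ∈ subdiff h (x k)) (hwg : ∀ k, w k ∈ subdiff g (y k))
    (hstep : ∀ k, x (k + 1) = y k + t k • (y k - x k))
    (hls : ∀ k, g (x (k + 1)) - h (x (k + 1)) ≤
      (g (y k) - h (y k)) - ρ * t k ^ 2 * ‖y k - x k‖ ^ 2 + ν k)
    (δ : ℕ → ℝ) (δmin : ℝ) (hδmin0 : 0 ≤ δmin) (hδmin1 : δmin < 1)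
    (hδ : ∀ k, δmin ≤ δ (k + 1) ∧ δ (k + 1) ≤ 1)
    (hrec : ∀ k, ν (k + 1) ≤ (1 - δ (k + 1)) *
      ((g (x k) - h (x k)) - (g (x (k + 1)) - h (x (k + 1))) + ν k))
    (hν0 : Filter.Tendsto ν Filter.atTop (nhds 0)) :
    ∀ xbar : EuclideanSpace ℝ (Fin n),
      (∃ φ : ℕ → ℕ, StrictMono φ ∧
        Filter.Tendsto (fun ℓ => x (φ ℓ)) Filter.atTop (nhds xbar)) →
      ∃ wbar, wbar ∈ subdiff g xbar ∩ subdiff h xbar := by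
  intro xbar ⟨φ, hφ, hxφ⟩
  set F : EuclideanSpace ℝ (Fin n) → ℝ := fun z => g z - h z with hF
  -- continuity of g and h
  have hgc : Continuous g := by
    exact continuousOn_univ.mp
      ((StrongConvexWith.convexOn hσ.le hgs).continuousOn isOpen_univ)
  have hhc : Continuous h := by
    exact continuousOn_univ.mp
      ((StrongConvexWith.convexOn hσ.le hhs).continuousOn isOpen_univ)
  -- key descent inequality
  have key : ∀ k, σ * ‖y k - x k‖ ^ 2 ≤ F (x k) - F (y k) := by
    intro k
    have A := strong_subgrad hσ hhs (hwh k) (y k)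
    have B := strong_subgrad hσ hgs (hwg k) (x k)
    rw [← neg_sub (y k) (x k), inner_neg_right, norm_neg] at B
    simp only [hF]
    linarith
  have hFd : ∀ k, F (x (k + 1)) ≤ F (x k) - σ * ‖y k - x k‖ ^ 2 + ν k := by
    intro k
    have h1 := hls k
    have h2 := key k
    have h3 : 0 ≤ ρ * t k ^ 2 * ‖y k - x k‖ ^ 2 := by positivity
    simp only [hF] at *
    linarith
  -- the merit function Δ is antitone and bounded below
  set Δ : ℕ → ℝ := fun k => F (x k) + ν k with hΔ
  have hΔanti : Antitone Δ := by
    apply antitone_nat_of_succ_le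
    intro k
    have h1 := hrec k
    have h2 := hFd k
    have h3 : 0 ≤ F (x k) - F (x (k + 1)) + ν k := by
      have := key k
      nlinarith [sq_nonneg ‖y k - x k‖, mul_nonneg hσ.le (sq_nonneg ‖y k - x k‖)]
    have hδ1 : 0 ≤ δ (k + 1) := le_trans hδmin0 (hδ k).1
    have := mul_nonneg hδ1 h3
    simp only [hΔ, hF] at *
    nlinarith
  obtain ⟨m0, hm0⟩ := hbd
  have hΔbdd : BddBelow (Set.range Δ) := by
    refine ⟨m0, ?_⟩
    rintro _ ⟨k, rfl⟩
    have h1 : m0 ≤ F (x k) := hm0 ⟨x k, rfl⟩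
    have := hν k
    simp only [hΔ]
    linarith
  have hL : Tendsto Δ atTop (nhds (⨅ k, Δ k)) := tendsto_atTop_ciInf hΔanti hΔbdd
  -- ‖y k - x k‖² → 0
  have hu : Tendsto (fun k => (Δ k - Δ (k + 1) + ν (k + 1)) / σ) atTop (nhds 0) := by
    have h1 : Tendsto (fun k => Δ (k + 1)) atTop (nhds (⨅ k, Δ k)) :=
      hL.comp (tendsto_add_atTop_nat 1)
    have h2 : Tendsto (fun k => ν (k + 1)) atTop (nhds 0) :=
      hν0.comp (tendsto_add_atTop_nat 1)
    have := ((hL.sub h1).add h2).div_const σ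
    simpa using this
  have hd2 : Tendsto (fun k => ‖y k - x k‖ ^ 2) atTop (nhds 0) := by
    apply tendsto_of_tendsto_of_tendsto_of_le_of_le (tendsto_const_nhds (x := 0)) hu
    · intro k; positivity
    · intro k
      rw [le_div_iff₀ hσ]
      have h1 := hFd k
      simp only [hΔ]
      linarith
  have hdn : Tendsto (fun k => y k - x k) atTop (nhds 0) := by
    rw [tendsto_zero_iff_norm_tendsto_zero]
    have := (Real.continuous_sqrt.tendsto 0).comp hd2
    simp only [Function.comp_def, Real.sqrt_zero] at this
    convert this using 2 with k
    rw [Real.sqrt_sq (norm_nonneg _)]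
  -- y ∘ φ → xbar
  have hyφ : Tendsto (fun ℓ => y (φ ℓ)) atTop (nhds xbar) := by
    have h1 : Tendsto (fun ℓ => y (φ ℓ) - x (φ ℓ)) atTop (nhds 0) :=
      hdn.comp hφ.tendsto_atTop
    have := h1.add hxφ
    simpa using this
  -- bound on the subgradients w (φ ℓ)
  obtain ⟨z0, _, hz0⟩ := (isCompact_closedBall xbar 3).exists_isMaxOn
    (Metric.nonempty_closedBall.mpr (by norm_num)) hhc.continuousOn
  set M : ℝ := h z0 with hM
  have hbound : ∀ᶠ ℓ in atTop, ‖w (φ ℓ)‖ ≤ max 0 (M - h xbar + 1) := by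
    have h1 : ∀ᶠ ℓ in atTop, dist (x (φ ℓ)) xbar < 1 :=
      (Metric.tendsto_nhds.mp hxφ) 1 one_pos
    have h2 : ∀ᶠ ℓ in atTop, h xbar - 1 < h (x (φ ℓ)) := by
      have : Tendsto (fun ℓ => h (x (φ ℓ))) atTop (nhds (h xbar)) :=
        (hhc.tendsto xbar).comp hxφ
      exact this.eventually (eventually_gt_nhds (by linarith))
    filter_upwards [h1, h2] with ℓ hd1 hh1
    rcases eq_or_ne (w (φ ℓ)) 0 with hw0 | hw0
    · simp [hw0]
    · set W := w (φ ℓ) with hW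
      have hWn : ‖W‖ ≠ 0 := norm_ne_zero_iff.mpr hw0
      set z := x (φ ℓ) + ‖W‖⁻¹ • W with hz
      have hzdist : z ∈ Metric.closedBall xbar 3 := by
        have hd : dist z (x (φ ℓ)) = 1 := by
          simp only [hz, dist_self_add_left, norm_smul, norm_inv, norm_norm]
          field_simp [hWn]
        have := dist_triangle z (x (φ ℓ)) xbar
        simp only [Metric.mem_closedBall]
        linarith
      have hsub := hwh (φ ℓ) z
      have hinner : (inner ℝ W (z - x (φ ℓ)) : ℝ) = ‖W‖ := by
        simp only [hz, add_sub_cancel_left, real_inner_smul_right,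
          real_inner_self_eq_norm_sq]
        field_simp [hWn]
      rw [hinner] at hsub
      have hzM : h z ≤ M := hz0 hzdist
      have : ‖W‖ ≤ M - h xbar + 1 := by linarith
      exact this.trans (le_max_right _ _)
  -- Bolzano–Weierstrass: extract a convergent subsequence of w ∘ φ
  have hfreq : ∃ᶠ ℓ in atTop, w (φ ℓ) ∈ Metric.closedBall 0 (max 0 (M - h xbar + 1)) := by
    apply (hbound.mono ?_).frequently
    intro ℓ hl
    simpa [Metric.mem_closedBall, dist_zero_right] using hl
  obtain ⟨wbar, _, ψ, hψ, hWψ⟩ := tendsto_subseq_of_frequently_bounded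
    Metric.isBounded_closedBall hfreq
  refine ⟨wbar, ?_, ?_⟩
  · -- wbar ∈ subdiff g xbar
    intro z
    have hyξ : Tendsto (fun m => y (φ (ψ m))) atTop (nhds xbar) :=
      hyφ.comp hψ.tendsto_atTop
    have hwξ : Tendsto (fun m => w (φ (ψ m))) atTop (nhds wbar) := hWψ
    have hlim : Tendsto (fun m => g (y (φ (ψ m))) +
        (inner ℝ (w (φ (ψ m))) (z - y (φ (ψ m))) : ℝ)) atTop
        (nhds (g xbar + (inner ℝ wbar (z - xbar) : ℝ))) :=
      (((hgc.tendsto xbar).comp hyξ).add (hwξ.inner (tendsto_const_nhds.sub hyξ)))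
    exact le_of_tendsto hlim (Eventually.of_forall fun m => hwg (φ (ψ m)) z)
  · -- wbar ∈ subdiff h xbar
    intro z
    have hxξ : Tendsto (fun m => x (φ (ψ m))) atTop (nhds xbar) :=
      hxφ.comp hψ.tendsto_atTop
    have hwξ : Tendsto (fun m => w (φ (ψ m))) atTop (nhds wbar) := hWψ
    have hlim : Tendsto (fun m => h (x (φ (ψ m))) +
        (inner ℝ (w (φ (ψ m))) (z - x (φ (ψ m))) : ℝ)) atTop
        (nhds (h xbar + (inner ℝ wbar (z - xbar) : ℝ))) :=
      (((hhc.tendsto xbar).comp hxξ).add (hwξ.inner (tendsto_const_nhds.sub hxξ)))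
    exact le_of_tendsto hlim (Eventually.of_forall fun m => hwh (φ (ψ m)) z)
end
end

section
/- Let g, h : ℝⁿ → ℝ be strongly convex with modulus σ > 0, let φ := g − h satisfy φ* := inf_{x∈ℝⁿ} φ(x) > −∞, let ρ > 0, and let sequences (x^k), (y^k), (w^k) in ℝⁿ, stepsizes t_k > 0 and parameters ν_k ≥ 0 satisfy, for every k: w^k ∈ ∂h(x^k), w^k ∈ ∂g(y^k), d^k := y^k − x^k, x^{k+1} = y^k + t_k d^k, and φ(x^{k+1}) ≤ φ(y^k) − ρ t_k² ‖d^k‖² + ν_k. If ∑_{k=0}^{∞} ν_k < ∞, then for every N ≥ 1: min{ ‖d^k‖ : k = 0, 1, …, N−1 } ≤ ( √( φ(x^0) − φ* + ∑_{k=0}^{∞} ν_k ) / √σ ) · (1/√N). -/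
open Set Filter Topology

noncomputable section

lemma strong_subdiff {n : ℕ} {f : EuclideanSpace ℝ (Fin n) → ℝ} {σ : ℝ}
    (hf : StrongConvexWith σ f) {x w : EuclideanSpace ℝ (Fin n)} (hw : w ∈ subdiff f x)
    (z : EuclideanSpace ℝ (Fin n)) :
    f x + (inner ℝ w (z - x) : ℝ) + σ / 2 * ‖z - x‖ ^ 2 ≤ f z := by
  have key : ∀ s : ℝ, 0 < s → s < 1 →
      (inner ℝ w (z - x) : ℝ) + σ / 2 * ((1 - s) * ‖z - x‖ ^ 2) ≤ f z - f x := by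
    intro s hs0 hs1
    have h1 := hf z x s hs0 hs1
    have h2 := hw (s • z + (1 - s) • x)
    have e : s • z + (1 - s) • x - x = s • (z - x) := by
      rw [smul_sub, sub_smul, one_smul]; abel
    rw [e, real_inner_smul_right] at h2
    have h3 := h2.trans h1
    nlinarith [h3, hs0]
  have hlim : Tendsto (fun s : ℝ => (inner ℝ w (z - x) : ℝ) + σ / 2 * ((1 - s) * ‖z - x‖ ^ 2))
      (𝓝[>] (0:ℝ)) (𝓝 ((inner ℝ w (z - x) : ℝ) + σ / 2 * ((1 - 0) * ‖z - x‖ ^ 2))) := by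
    apply Tendsto.mono_left _ nhdsWithin_le_nhds
    exact Continuous.tendsto (by continuity) 0
  have hev : ∀ᶠ s in 𝓝[>] (0:ℝ),
      (inner ℝ w (z - x) : ℝ) + σ / 2 * ((1 - s) * ‖z - x‖ ^ 2) ≤ f z - f x := by
    filter_upwards [Ioo_mem_nhdsGT_of_mem (by simp : (0:ℝ) ∈ Ico (0:ℝ) 1)] with s hs
    exact key s hs.1 hs.2
  have := le_of_tendsto hlim hev
  simp only [sub_zero, one_mul] at this
  linarith

theorem stmt12 {n : ℕ} (g h : EuclideanSpace ℝ (Fin n) → ℝ) (σ ρ : ℝ)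
    (hσ : 0 < σ) (hρ : 0 < ρ)
    (hgs : StrongConvexWith σ g) (hhs : StrongConvexWith σ h)
    (hbd : BddBelow (Set.range fun z => g z - h z))
    (x y w : ℕ → EuclideanSpace ℝ (Fin n)) (t ν : ℕ → ℝ)
    (ht : ∀ k, 0 < t k) (hν : ∀ k, 0 ≤ ν k)
    (hwh : ∀ k, w k ∈ subdiff h (x k)) (hwg : ∀ k, w k ∈ subdiff g (y k))
    (hstep : ∀ k, x (k + 1) = y k + t k • (y k - x k))
    (hls : ∀ k, g (x (k + 1)) - h (x (k + 1)) ≤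
      (g (y k) - h (y k)) - ρ * t k ^ 2 * ‖y k - x k‖ ^ 2 + ν k)
    (hsum : Summable ν) :
    ∀ N : ℕ, 1 ≤ N → ∃ k < N, ‖y k - x k‖ ≤
      Real.sqrt ((g (x 0) - h (x 0)) - (⨅ z, (g z - h z)) + ∑' k, ν k) / Real.sqrt σ *
        (1 / Real.sqrt N) := by
  intro N hN
  set φ : EuclideanSpace ℝ (Fin n) → ℝ := fun z => g z - h z with hφ
  -- key per-step inequality: σ‖dᵏ‖² ≤ φ(xᵏ) - φ(yᵏ)
  have key : ∀ k, σ * ‖y k - x k‖ ^ 2 ≤ φ (x k) - φ (y k) := by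
    intro k
    have h1 := strong_subdiff hhs (hwh k) (y k)
    have h2 := strong_subdiff hgs (hwg k) (x k)
    have e1 : (inner ℝ (w k) (x k - y k) : ℝ) = - (inner ℝ (w k) (y k - x k) : ℝ) := by
      rw [← inner_neg_right, neg_sub]
    have e2 : ‖x k - y k‖ = ‖y k - x k‖ := norm_sub_rev _ _
    rw [e1, e2] at h2
    simp only [hφ]
    nlinarith [h1, h2]
  -- descent on φ(xᵏ)
  have desc : ∀ k, φ (x (k + 1)) ≤ φ (x k) - σ * ‖y k - x k‖ ^ 2 + ν k := by
    intro k
    have h1 := hls k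
    have h2 := key k
    have h3 : 0 ≤ ρ * t k ^ 2 * ‖y k - x k‖ ^ 2 := by positivity
    simp only [hφ] at *
    linarith
  -- telescoping sum
  have tel : ∀ M : ℕ, (∑ k ∈ Finset.range M, σ * ‖y k - x k‖ ^ 2) + φ (x M)
      ≤ φ (x 0) + ∑ k ∈ Finset.range M, ν k := by
    intro M
    induction M with
    | zero => simp
    | succ m ih =>
      rw [Finset.sum_range_succ, Finset.sum_range_succ]
      have := desc m
      linarith
  -- bound the sum by C
  set C : ℝ := (g (x 0) - h (x 0)) - (⨅ z, (g z - h z)) + ∑' k, ν k with hC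
  have hSC : (∑ k ∈ Finset.range N, σ * ‖y k - x k‖ ^ 2) ≤ C := by
    have h1 : (⨅ z, (g z - h z)) ≤ φ (x N) := ciInf_le hbd (x N)
    have h2 : (∑ k ∈ Finset.range N, ν k) ≤ ∑' k, ν k :=
      Summable.sum_le_tsum (Finset.range N) (fun i _ => hν i) hsum
    have := tel N
    simp only [hφ, hC] at *
    linarith
  have hCnn : 0 ≤ C := by
    refine le_trans ?_ hSC
    exact Finset.sum_nonneg fun i _ => by positivity
  -- pick minimizing index
  obtain ⟨k, hkN, hkmin⟩ := Finset.exists_min_image (Finset.range N)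
    (fun k => ‖y k - x k‖) ⟨0, Finset.mem_range.mpr hN⟩
  rw [Finset.mem_range] at hkN
  refine ⟨k, hkN, ?_⟩
  -- N * σ * ‖dᵏ‖² ≤ C
  have hlb : (N : ℝ) * (σ * ‖y k - x k‖ ^ 2) ≤ ∑ j ∈ Finset.range N, σ * ‖y j - x j‖ ^ 2 := by
    have := Finset.card_nsmul_le_sum (Finset.range N) (fun j => σ * ‖y j - x j‖ ^ 2)
      (σ * ‖y k - x k‖ ^ 2) (fun j hj => by
        have hle := hkmin j hj
        have h2 : ‖y k - x k‖ ^ 2 ≤ ‖y j - x j‖ ^ 2 :=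
          pow_le_pow_left₀ (norm_nonneg _) hle 2
        show σ * ‖y k - x k‖ ^ 2 ≤ σ * ‖y j - x j‖ ^ 2
        nlinarith [hσ, h2])
    simpa [Finset.card_range, nsmul_eq_mul] using this
  have hmain : ‖y k - x k‖ ^ 2 ≤ C / ((N : ℝ) * σ) := by
    have hNpos : (0:ℝ) < N := by exact_mod_cast hN
    rw [le_div_iff₀ (by positivity)]
    nlinarith [hlb.trans hSC]
  have hNpos : (0:ℝ) < N := by exact_mod_cast hN
  calc ‖y k - x k‖ = Real.sqrt (‖y k - x k‖ ^ 2) := by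
        rw [Real.sqrt_sq (norm_nonneg _)]
    _ ≤ Real.sqrt (C / ((N : ℝ) * σ)) := Real.sqrt_le_sqrt hmain
    _ = Real.sqrt C / Real.sqrt σ * (1 / Real.sqrt N) := by
        rw [Real.sqrt_div hCnn, Real.sqrt_mul (le_of_lt hNpos)]
        ring
end
end
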